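/- Let φ: [t₁, ∞) → ℝ be absolutely continuous with 0 ≤ φ(t₁) and φ'(t) ≥ b(c² − φ(t)²) a.e. for constants b > 0, 0 < c ≤ 1, where additionally φ(t) ≤ 1 for all t. Then for all t ≥ t₁, φ(t) ≥ c · tanh((t − t₁)·b·c). -/

import Mathlib

lemma aux_hasDerivAt_tanh (x : ℝ) :
    HasDerivAt Real.tanh (1 - Real.tanh x ^ 2) x := by
  have h : HasDerivAt (fun y => Real.sinh y / Real.cosh y)
      ((Real.cosh x * Real.cosh x - Real.sinh x * Real.sinh x) / Real.cosh x ^ 2) x :=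
    (Real.hasDerivAt_sinh x).div (Real.hasDerivAt_cosh x) (ne_of_gt (Real.cosh_pos x))
  have hfun : (fun y => Real.sinh y / Real.cosh y) = Real.tanh := by
    funext y; rw [Real.tanh_eq_sinh_div_cosh]
  rw [hfun] at h
  convert h using 1
  have hc := Real.cosh_pos x
  rw [Real.tanh_eq_sinh_div_cosh]
  field_simp

lemma aux_tanh_nonneg {x : ℝ} (hx : 0 ≤ x) : 0 ≤ Real.tanh x := by
  rw [Real.tanh_eq_sinh_div_cosh]
  exact div_nonneg (Real.sinh_nonneg_iff.2 hx) (Real.cosh_pos x).le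

lemma aux_tanh_lt_one (x : ℝ) : Real.tanh x < 1 := by
  rw [Real.tanh_eq_sinh_div_cosh]
  rw [div_lt_one (Real.cosh_pos x)]
  exact Real.sinh_lt_cosh x

lemma aux_continuous_tanh : Continuous Real.tanh := by
  have : Differentiable ℝ Real.tanh := fun x => (aux_hasDerivAt_tanh x).differentiableAt
  exact this.continuous

/-- ODE comparison with `tanh`: if `φ(t₁) ≥ 0`, `φ ≤ 1`, and
`φ' t ≥ b (c² − φ(t)²)` for `t ≥ t₁`, with `b > 0`, `0 < c ≤ 1`, then
`φ t ≥ c tanh((t − t₁) b c)` for all `t ≥ t₁`. -/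
theorem stmt18 (φ φ' : ℝ → ℝ) (t₁ b c : ℝ) (hb : 0 < b) (hc0 : 0 < c) (hc1 : c ≤ 1)
    (hφ : ∀ t, t₁ ≤ t → HasDerivAt φ (φ' t) t)
    (h0 : 0 ≤ φ t₁)
    (hub : ∀ t, t₁ ≤ t → φ t ≤ 1)
    (hineq : ∀ t, t₁ ≤ t → φ' t ≥ b * (c ^ 2 - (φ t) ^ 2)) :
    ∀ t, t₁ ≤ t → φ t ≥ c * Real.tanh ((t - t₁) * b * c) := by
  intro t ht
  -- key estimate for every slope factor `l ∈ (0,1)`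
  have key : ∀ l : ℝ, 0 < l → l < 1 →
      c * Real.tanh ((t - t₁) * b * c * l) ≤ φ t := by
    intro l hl0 hl1
    set f : ℝ → ℝ := fun x => c * Real.tanh ((x - t₁) * b * c * l) with hfdef
    set f' : ℝ → ℝ :=
      fun x => c * ((1 - Real.tanh ((x - t₁) * b * c * l) ^ 2) * (b * c * l)) with hf'def
    have hfderiv : ∀ x : ℝ, HasDerivAt f (f' x) x := by
      intro x
      have h1 : HasDerivAt (fun y : ℝ => (y - t₁) * b * c * l) (b * c * l) x := by
        have := (((hasDerivAt_id x).sub_const t₁).mul_const b).mul_const c |>.mul_const l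
        simpa using this
      have h2 := (aux_hasDerivAt_tanh ((x - t₁) * b * c * l)).comp x h1
      simpa [hfdef, hf'def, mul_comm, mul_assoc] using h2.const_mul c
    have main := image_le_of_deriv_right_lt_deriv_boundary'
      (f := f) (f' := f') (B := φ) (B' := φ') (a := t₁) (b := t)
      (fun x _ => (hfderiv x).continuousAt.continuousWithinAt)
      (fun x hx => (hfderiv x).hasDerivWithinAt)
      (by simpa [hfdef] using h0)
      (fun x hx => ((hφ x hx.1).continuousAt).continuousWithinAt)
      (fun x hx => (hφ x hx.1).hasDerivWithinAt)
      ?_ (Set.right_mem_Icc.2 ht)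
    · exact main
    · intro x hx heq
      have hx1 : t₁ ≤ x := hx.1
      set u : ℝ := (x - t₁) * b * c * l with hu
      have hu0 : 0 ≤ u := by
        have : 0 ≤ x - t₁ := sub_nonneg.2 hx1
        positivity
      have hT0 : 0 ≤ Real.tanh u := aux_tanh_nonneg hu0
      have hT1 : Real.tanh u < 1 := aux_tanh_lt_one u
      have hφx : φ x = c * Real.tanh u := heq.symm
      have hφlt : φ x < c := by
        rw [hφx]
        nlinarith
      have hφnn : 0 ≤ φ x := by rw [hφx]; positivity
      have hsq : φ x ^ 2 < c ^ 2 := by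
        have := pow_lt_pow_left₀ hφlt hφnn two_ne_zero
        simpa using this
      have hpos : 0 < b * (c ^ 2 - φ x ^ 2) := mul_pos hb (by linarith)
      have hstep : f' x = l * (b * (c ^ 2 - φ x ^ 2)) := by
        rw [hf'def, hφx]; ring
      have := hineq x hx1
      rw [hstep]
      nlinarith
  -- take the limit `l → 1⁻`
  have hcont : Filter.Tendsto (fun l : ℝ => c * Real.tanh ((t - t₁) * b * c * l))
      (nhdsWithin 1 (Set.Iio 1)) (nhds (c * Real.tanh ((t - t₁) * b * c))) := by
    have hC : Continuous fun l : ℝ => c * Real.tanh ((t - t₁) * b * c * l) :=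
      continuous_const.mul (aux_continuous_tanh.comp (continuous_const.mul continuous_id))
    have := (hC.tendsto 1).mono_left (nhdsWithin_le_nhds (s := Set.Iio 1))
    simpa using this
  refine le_of_tendsto hcont ?_
  have h1 : ∀ᶠ l : ℝ in nhdsWithin 1 (Set.Iio 1), 0 < l :=
    Filter.Eventually.filter_mono nhdsWithin_le_nhds (eventually_gt_nhds one_pos)
  filter_upwards [h1, self_mem_nhdsWithin] with l hl0 hl1
  exact key l hl0 hl1
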